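/- Let Q denote the Gaussian tail function Q(x) = ∫_x^∞ (1/√(2π)) e^{-t²/2} dt. Fix K ∈ ℕ, M > 0, σ > 0, and for each k = 0, …, K−1 let r_k ≥ 0, g_k ≥ 0, δ ∈ ℝ, P_f^{(k)}(γ) = Q((γ - M σ²)/(σ² √(2M))), and P_m^{(k)}(γ) = 1 - Q((γ - M(σ² + g_k))/(σ √(2M(σ² + 2g_k)))). Suppose bounds γ_min,k and γ_max,k satisfy M σ² ≤ γ_min,k ≤ γ_max,k ≤ M(σ² + g_k) for every k. Then the feasible set of problem (P3), namely {γ ∈ ℝ^K : Σ_{k=0}^{K−1} r_k (1 - P_f^{(k)}(γ_k)) ≥ δ, and γ_min,k ≤ γ_k ≤ γ_max,k for all k}, is a convex subset of ℝ^K, and for any c_k ≥ 0 the objective γ ↦ Σ_{k=0}^{K−1} c_k P_m^{(k)}(γ_k) is convex on this set. -/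

import Mathlib

/-- The Gaussian tail function `Q(x) = ∫_x^∞ (1/√(2π)) e^{-t²/2} dt`. -/
noncomputable def gaussQ (x : ℝ) : ℝ :=
  ∫ t in Set.Ioi x, (Real.sqrt (2 * Real.pi))⁻¹ * Real.exp (-t ^ 2 / 2)

open MeasureTheory Set

noncomputable def phiG (t : ℝ) : ℝ := (Real.sqrt (2 * Real.pi))⁻¹ * Real.exp (-t ^ 2 / 2)

lemma phiG_integrable : Integrable phiG := by
  have h : Integrable fun t : ℝ => Real.exp (-(1/2 : ℝ) * t ^ 2) :=
    integrable_exp_neg_mul_sq (by norm_num)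
  refine (h.const_mul (Real.sqrt (2 * Real.pi))⁻¹).congr ?_
  filter_upwards with t; unfold phiG; ring_nf

lemma phiG_continuous : Continuous phiG := by unfold phiG; fun_prop

lemma gaussQ_split {a b : ℝ} (h : a ≤ b) :
    (∫ t in Set.Ioi a, phiG t) = (∫ t in Set.Ioc a b, phiG t) + ∫ t in Set.Ioi b, phiG t := by
  rw [← Set.Ioc_union_Ioi_eq_Ioi h, setIntegral_union (Set.Ioc_disjoint_Ioi le_rfl)
    measurableSet_Ioi phiG_integrable.integrableOn phiG_integrable.integrableOn]

lemma gaussQ_eq (x : ℝ) : gaussQ x = gaussQ 0 - ∫ t in (0:ℝ)..x, phiG t := by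
  unfold gaussQ
  show (∫ t in Set.Ioi x, phiG t) = (∫ t in Set.Ioi (0:ℝ), phiG t) - _
  rcases le_total 0 x with h | h
  · rw [intervalIntegral.integral_of_le h, gaussQ_split h]; abel
  · rw [intervalIntegral.integral_of_ge h, gaussQ_split h]; abel

lemma hasDerivAt_gaussQ (x : ℝ) : HasDerivAt gaussQ (-(phiG x)) x := by
  have hG : HasDerivAt (fun y => ∫ t in (0:ℝ)..y, phiG t) (phiG x) x :=
    intervalIntegral.integral_hasDerivAt_right phiG_integrable.intervalIntegrable
      phiG_continuous.stronglyMeasurable.stronglyMeasurableAtFilter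
      phiG_continuous.continuousAt
  have h2 : HasDerivAt (fun y => gaussQ 0 - ∫ t in (0:ℝ)..y, phiG t) (0 - phiG x) x :=
    (hasDerivAt_const x (gaussQ 0)).sub hG
  rw [zero_sub] at h2
  exact h2.congr_of_eventuallyEq (Filter.Eventually.of_forall fun y => gaussQ_eq y)

noncomputable def PhiG (x : ℝ) : ℝ := 1 - gaussQ x

lemma hasDerivAt_PhiG (x : ℝ) : HasDerivAt PhiG (phiG x) x := by
  have := (hasDerivAt_const x (1:ℝ)).sub (hasDerivAt_gaussQ x)
  rw [sub_neg_eq_add, zero_add] at this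
  exact this

lemma deriv_PhiG : deriv PhiG = phiG := funext fun x => (hasDerivAt_PhiG x).deriv

lemma PhiG_convexOn : ConvexOn ℝ (Iic 0) PhiG := by
  refine MonotoneOn.convexOn_of_deriv (convex_Iic 0) ?_ ?_ ?_
  · exact fun x _ => (hasDerivAt_PhiG x).continuousAt.continuousWithinAt
  · exact fun x _ => (hasDerivAt_PhiG x).differentiableAt.differentiableWithinAt
  · rw [deriv_PhiG]
    intro x hx y hy hxy
    simp only [interior_Iic, mem_Iio] at hx hy
    unfold phiG
    have h1 : -x^2/2 ≤ -y^2/2 := by nlinarith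
    have h0 : (0:ℝ) ≤ (Real.sqrt (2*Real.pi))⁻¹ := by positivity
    exact mul_le_mul_of_nonneg_left (Real.exp_le_exp.2 h1) h0

lemma PhiG_concaveOn : ConcaveOn ℝ (Ici 0) PhiG := by
  refine AntitoneOn.concaveOn_of_deriv (convex_Ici 0) ?_ ?_ ?_
  · exact fun x _ => (hasDerivAt_PhiG x).continuousAt.continuousWithinAt
  · exact fun x _ => (hasDerivAt_PhiG x).differentiableAt.differentiableWithinAt
  · rw [deriv_PhiG]
    intro x hx y hy hxy
    simp only [interior_Ici, mem_Ioi] at hx hy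
    unfold phiG
    have h1 : -y^2/2 ≤ -x^2/2 := by nlinarith
    have h0 : (0:ℝ) ≤ (Real.sqrt (2*Real.pi))⁻¹ := by positivity
    exact mul_le_mul_of_nonneg_left (Real.exp_le_exp.2 h1) h0

private lemma aff_key (p q x y a b : ℝ) (hpq : p + q = 1) :
    (p*x + q*y - a)/b = p * ((x-a)/b) + q * ((y-a)/b) := by
  have h : p*x + q*y - a = p*(x-a) + q*(y-a) := by linear_combination a * hpq
  rw [h, add_div, mul_div_assoc, mul_div_assoc]

lemma ConvexOn.comp_sub_div {f : ℝ → ℝ} {s : Set ℝ} (hf : ConvexOn ℝ s f) (a b : ℝ) :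
    ConvexOn ℝ {t : ℝ | (t - a)/b ∈ s} (fun t => f ((t - a)/b)) := by
  constructor
  · intro x hx y hy p q hp hq hpq
    simp only [mem_setOf_eq, smul_eq_mul] at *
    rw [aff_key p q x y a b hpq]
    exact hf.1 hx hy hp hq hpq
  · intro x hx y hy p q hp hq hpq
    simp only [mem_setOf_eq, smul_eq_mul] at *
    rw [aff_key p q x y a b hpq]
    exact hf.2 hx hy hp hq hpq

lemma ConcaveOn.comp_sub_div {f : ℝ → ℝ} {s : Set ℝ} (hf : ConcaveOn ℝ s f) (a b : ℝ) :
    ConcaveOn ℝ {t : ℝ | (t - a)/b ∈ s} (fun t => f ((t - a)/b)) := by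
  constructor
  · intro x hx y hy p q hp hq hpq
    simp only [mem_setOf_eq, smul_eq_mul] at *
    rw [aff_key p q x y a b hpq]
    exact hf.1 hx hy hp hq hpq
  · intro x hx y hy p q hp hq hpq
    simp only [mem_setOf_eq, smul_eq_mul] at *
    rw [aff_key p q x y a b hpq]
    exact hf.2 hx hy hp hq hpq

lemma ConvexOn.comp_eval {K : ℕ} (k : Fin K) {f : ℝ → ℝ} {s : Set ℝ} (hf : ConvexOn ℝ s f) :
    ConvexOn ℝ {γ : Fin K → ℝ | γ k ∈ s} (fun γ => f (γ k)) := by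
  constructor
  · intro x hx y hy p q hp hq hpq
    simp only [mem_setOf_eq] at *
    simpa using hf.1 hx hy hp hq hpq
  · intro x hx y hy p q hp hq hpq
    simp only [mem_setOf_eq] at hx hy
    simpa using hf.2 hx hy hp hq hpq

lemma ConcaveOn.comp_eval {K : ℕ} (k : Fin K) {f : ℝ → ℝ} {s : Set ℝ} (hf : ConcaveOn ℝ s f) :
    ConcaveOn ℝ {γ : Fin K → ℝ | γ k ∈ s} (fun γ => f (γ k)) := by
  constructor
  · intro x hx y hy p q hp hq hpq
    simp only [mem_setOf_eq] at *
    simpa using hf.1 hx hy hp hq hpq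
  · intro x hx y hy p q hp hq hpq
    simp only [mem_setOf_eq] at hx hy
    simpa using hf.2 hx hy hp hq hpq

lemma convexOn_fsum {ι E : Type*} [AddCommGroup E] [Module ℝ E] {s : Set E} (hs : Convex ℝ s)
    (t : Finset ι) (f : ι → E → ℝ) (h : ∀ i ∈ t, ConvexOn ℝ s (f i)) :
    ConvexOn ℝ s (fun x => ∑ i ∈ t, f i x) := by
  induction t using Finset.cons_induction with
  | empty => simpa using convexOn_const 0 hs
  | cons a t ha ih =>
    simp only [Finset.sum_cons]
    exact (h a (Finset.mem_cons_self a t)).add (ih fun i hi => h i (Finset.mem_cons_of_mem hi))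

lemma concaveOn_fsum {ι E : Type*} [AddCommGroup E] [Module ℝ E] {s : Set E} (hs : Convex ℝ s)
    (t : Finset ι) (f : ι → E → ℝ) (h : ∀ i ∈ t, ConcaveOn ℝ s (f i)) :
    ConcaveOn ℝ s (fun x => ∑ i ∈ t, f i x) := by
  induction t using Finset.cons_induction with
  | empty => simpa using concaveOn_const 0 hs
  | cons a t ha ih =>
    simp only [Finset.sum_cons]
    exact (h a (Finset.mem_cons_self a t)).add (ih fun i hi => h i (Finset.mem_cons_of_mem hi))

/-- the feasible set of problem (P3),
`{γ ∈ ℝ^K : Σ_k r_k (1 - P_f^{(k)}(γ_k)) ≥ δ, γ_min,k ≤ γ_k ≤ γ_max,k ∀k}`,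
is convex whenever `Mσ² ≤ γ_min,k ≤ γ_max,k ≤ M(σ² + g_k)`, and for any
nonnegative costs `c_k` the objective `Σ_k c_k P_m^{(k)}(γ_k)` is convex on it. -/
theorem P3_feasible_convex_and_objective_convexOn (K : ℕ) (M σ δ : ℝ)
    (hM : 0 < M) (hσ : 0 < σ)
    (r g : Fin K → ℝ) (hr : ∀ k, 0 ≤ r k) (hg : ∀ k, 0 ≤ g k)
    (γmin γmax : Fin K → ℝ)
    (hbounds : ∀ k, M * σ ^ 2 ≤ γmin k ∧ γmin k ≤ γmax k ∧
      γmax k ≤ M * (σ ^ 2 + g k)) :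
    Convex ℝ
      {γ : Fin K → ℝ |
        δ ≤ ∑ k : Fin K,
          r k * (1 - gaussQ ((γ k - M * σ ^ 2) / (σ ^ 2 * Real.sqrt (2 * M)))) ∧
        (∀ k : Fin K, γmin k ≤ γ k ∧ γ k ≤ γmax k)} ∧
    (∀ c : Fin K → ℝ, (∀ k, 0 ≤ c k) →
      ConvexOn ℝ
        {γ : Fin K → ℝ |
          δ ≤ ∑ k : Fin K,
            r k * (1 - gaussQ ((γ k - M * σ ^ 2) / (σ ^ 2 * Real.sqrt (2 * M)))) ∧
          (∀ k : Fin K, γmin k ≤ γ k ∧ γ k ≤ γmax k)}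
        (fun γ : Fin K → ℝ =>
          ∑ k : Fin K,
            c k * (1 - gaussQ ((γ k - M * (σ ^ 2 + g k)) /
              (σ * Real.sqrt (2 * M * (σ ^ 2 + 2 * g k))))))) := by
  -- notation
  set b1 : ℝ := σ ^ 2 * Real.sqrt (2 * M) with hb1def
  have hb1 : 0 < b1 := by
    have : 0 < Real.sqrt (2 * M) := Real.sqrt_pos.2 (by linarith)
    positivity
  set B : Set (Fin K → ℝ) := {γ : Fin K → ℝ | ∀ k, γmin k ≤ γ k ∧ γ k ≤ γmax k} with hBdef
  have hB : Convex ℝ B := by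
    have hBeq : B = Set.pi Set.univ (fun k => Icc (γmin k) (γmax k)) := by
      ext γ; simp [hBdef, Set.mem_pi, Set.mem_Icc, forall_and, Pi.le_def]
    rw [hBeq]
    exact convex_pi fun i _ => convex_Icc _ _
  -- concavity of the throughput constraint on B
  have hconc : ConcaveOn ℝ B (fun γ : Fin K → ℝ =>
      ∑ k : Fin K, r k * (1 - gaussQ ((γ k - M * σ ^ 2) / b1))) := by
    refine concaveOn_fsum hB _ _ fun k _ => ?_
    have h1 : ConcaveOn ℝ {t : ℝ | (t - M * σ ^ 2) / b1 ∈ Ici 0}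
        (fun t => PhiG ((t - M * σ ^ 2) / b1)) := PhiG_concaveOn.comp_sub_div _ _
    have h2 := (h1.comp_eval k).subset ?_ hB
    · have h3 := h2.smul (hr k)
      refine h3.congr fun γ _ => ?_
      simp [PhiG, mul_comm]
    · intro γ hγ
      have hk := hγ k
      have := (hbounds k).1
      exact div_nonneg (by simp only [sub_nonneg]; linarith [hk.1]) hb1.le
  have hSconvex : Convex ℝ
      {γ : Fin K → ℝ |
        δ ≤ ∑ k : Fin K,
          r k * (1 - gaussQ ((γ k - M * σ ^ 2) / b1)) ∧
        (∀ k : Fin K, γmin k ≤ γ k ∧ γ k ≤ γmax k)} := by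
    have := hconc.convex_ge δ
    convert this using 1
    ext γ
    simp only [Set.mem_setOf_eq, Set.mem_sep_iff, hBdef]
    tauto
  refine ⟨hSconvex, fun c hc => ?_⟩
  -- convexity of the objective on B, hence on the feasible set
  have hobj : ConvexOn ℝ B (fun γ : Fin K → ℝ =>
      ∑ k : Fin K, c k * (1 - gaussQ ((γ k - M * (σ ^ 2 + g k)) /
        (σ * Real.sqrt (2 * M * (σ ^ 2 + 2 * g k)))))) := by
    refine convexOn_fsum hB _ _ fun k _ => ?_
    set b2 : ℝ := σ * Real.sqrt (2 * M * (σ ^ 2 + 2 * g k)) with hb2def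
    have hb2 : 0 < b2 := by
      have hg' := hg k
      have hσ2 : 0 < σ ^ 2 := pow_pos hσ 2
      have : 0 < Real.sqrt (2 * M * (σ ^ 2 + 2 * g k)) :=
        Real.sqrt_pos.2 (by nlinarith)
      positivity
    have h1 : ConvexOn ℝ {t : ℝ | (t - M * (σ ^ 2 + g k)) / b2 ∈ Iic 0}
        (fun t => PhiG ((t - M * (σ ^ 2 + g k)) / b2)) := PhiG_convexOn.comp_sub_div _ _
    have h2 := (h1.comp_eval k).subset ?_ hB
    · have h3 := h2.smul (hc k)
      refine h3.congr fun γ _ => ?_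
      simp [PhiG, mul_comm]
    · intro γ hγ
      have hk := hγ k
      have hbk := (hbounds k).2.2
      have : γ k - M * (σ ^ 2 + g k) ≤ 0 := by linarith [hk.2]
      exact div_nonpos_of_nonpos_of_nonneg this hb2.le
  exact hobj.subset (fun γ hγ => hγ.2) hSconvex
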